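/- Let H be an n×n symmetric positive definite matrix and let Y = (Y_{e^t})_{t∈ℤ} be an n-dimensional H-self-similar process. Define G = (G_t)_{t∈ℤ} by G_t = Σ_{k=1}^t e^{−kH} Δ_k Y_{e^k} for t ≥ 1, G_0 = 0, and G_t = −Σ_{k=t+1}^0 e^{−kH} Δ_k Y_{e^k} for t ≤ −1, where Δ_k Y_{e^k} = Y_{e^k} − Y_{e^{k−1}}. Then G has stationary increments, G_0 = 0, and the partial sums Σ_{k=l}^0 e^{kH} Δ_k G converge in probability to Y_1 as l → −∞; in particular G ∈ 𝒢_H. -/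

import Mathlib

set_option autoImplicit false

open MeasureTheory Filter Finset Matrix Topology

variable {Ω : Type*}

/-- Two `ℤ`-indexed `ℝⁿ`-valued processes have the same finite-dimensional
distributions. -/
def SameFDD {n : ℕ} [MeasurableSpace Ω] (μ : Measure Ω)
    (X Y : ℤ → Ω → (Fin n → ℝ)) : Prop :=
  ∀ (m : ℕ) (t : Fin m → ℤ),
    μ.map (fun ω (i : Fin m) => X (t i) ω) = μ.map (fun ω (i : Fin m) => Y (t i) ω)

/-- Strict stationarity of a `ℤ`-indexed process. -/
def IsStationaryProcess {n : ℕ} [MeasurableSpace Ω] (μ : Measure Ω)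
    (X : ℤ → Ω → (Fin n → ℝ)) : Prop :=
  ∀ s : ℤ, SameFDD μ (fun t => X (t + s)) X

/-- Stationarity of increments of a `ℤ`-indexed process. -/
def HasStationaryIncrements {n : ℕ} [MeasurableSpace Ω] (μ : Measure Ω)
    (G : ℤ → Ω → (Fin n → ℝ)) : Prop :=
  ∀ s : ℤ, SameFDD μ (fun t ω => G (t + s) ω - G s ω) (fun t ω => G t ω - G 0 ω)

/-- The matrix exponential `e^{tH}` for an integer `t`. -/
noncomputable def zexp {n : ℕ} (H : Matrix (Fin n) (Fin n) ℝ) (t : ℤ) :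
    Matrix (Fin n) (Fin n) ℝ :=
  NormedSpace.exp ((t : ℝ) • H)

/-- The partial sum `Σ_{k=l}^0 e^{kH} Δ_k G`. -/
noncomputable def partialSumG {n : ℕ} (H : Matrix (Fin n) (Fin n) ℝ)
    (G : ℤ → Ω → (Fin n → ℝ)) (l : ℤ) (ω : Ω) : Fin n → ℝ :=
  ∑ k ∈ Finset.Icc l 0, (zexp H k).mulVec (G k ω - G (k - 1) ω)

/-- `G ∈ 𝒢_H` : `G` is a stationary-increment process starting from `0` whose partial
sums `Σ_{k=l}^0 e^{kH} Δ_k G` converge in probability as `l → −∞`. -/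
def MemG {n : ℕ} [MeasurableSpace Ω] (μ : Measure Ω) (H : Matrix (Fin n) (Fin n) ℝ)
    (G : ℤ → Ω → (Fin n → ℝ)) : Prop :=
  (∀ ω, G 0 ω = 0) ∧ HasStationaryIncrements μ G ∧
    ∃ ξ : Ω → (Fin n → ℝ), TendstoInMeasure μ (fun l => partialSumG H G l) Filter.atBot ξ

/-- `H`-self-similarity of a process `Y` indexed by `t ∈ ℤ`, where `Y t`
represents `Y_{e^t}`. -/
def IsSelfSimilar {n : ℕ} [MeasurableSpace Ω] (μ : Measure Ω)
    (H : Matrix (Fin n) (Fin n) ℝ) (Y : ℤ → Ω → (Fin n → ℝ)) : Prop :=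
  ∀ s : ℤ, SameFDD μ (fun t => Y (t + s)) (fun t ω => (zexp H s).mulVec (Y t ω))


section AuxLemmas

variable {n : ℕ} (H : Matrix (Fin n) (Fin n) ℝ)

lemma zexp_zero : zexp H 0 = 1 := by
  simp [zexp, NormedSpace.exp_zero]

lemma zexp_mul (a b : ℤ) : zexp H a * zexp H b = zexp H (a + b) := by
  rw [zexp, zexp, zexp, ← Matrix.exp_add_of_commute]
  · congr 1
    push_cast
    rw [add_smul]
  · exact ((Commute.refl H).smul_left _).smul_right _

lemma zexp_cancel' (s : ℤ) (v : Fin n → ℝ) :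
    (zexp H (-s)) *ᵥ ((zexp H s) *ᵥ v) = v := by
  rw [Matrix.mulVec_mulVec, zexp_mul]
  simp [zexp_zero]

lemma zexp_tendsto (hH : H.PosDef) : Tendsto (fun m : ℤ => zexp H m) atBot (𝓝 0) := by
  classical
  set U : Matrix (Fin n) (Fin n) ℝ :=
    (Matrix.IsHermitian.eigenvectorUnitary hH.1 : Matrix (Fin n) (Fin n) ℝ) with hUdef
  have hUst : U * star U = 1 :=
    (Matrix.mem_unitaryGroup_iff).mp (Matrix.IsHermitian.eigenvectorUnitary hH.1).2
  have hUinv : U⁻¹ = star U := Matrix.inv_eq_right_inv hUst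
  have hstU : star U * U = 1 :=
    (Matrix.mem_unitaryGroup_iff').mp (Matrix.IsHermitian.eigenvectorUnitary hH.1).2
  have hUisUnit : IsUnit U := ⟨⟨U, star U, hUst, hstU⟩, rfl⟩
  have hdiag : ∀ m : ℤ, zexp H m =
      U * Matrix.diagonal (fun i => Real.exp ((m : ℝ) * hH.1.eigenvalues i)) * star U := by
    intro m
    have hspec := hH.1.spectral_theorem
    have h1 : ((m : ℝ)) • H = U * Matrix.diagonal (fun i => (m : ℝ) * hH.1.eigenvalues i) * U⁻¹ := by
      rw [hUinv]
      conv_lhs => rw [hspec]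
      rw [Unitary.conjStarAlgAut_apply]
      rw [← hUdef, ← smul_mul_assoc, ← mul_smul_comm, ← Matrix.diagonal_smul]
      congr 2
    rw [zexp, h1, Matrix.exp_conj U _ hUisUnit, Matrix.exp_diagonal, hUinv]
    congr 2
    funext i
    rw [Pi.exp_def]
    rw [← Real.exp_eq_exp_ℝ]
  have hd : Tendsto (fun m : ℤ => Matrix.diagonal (fun i => Real.exp ((m : ℝ) * hH.1.eigenvalues i)))
      atBot (𝓝 (0 : Matrix (Fin n) (Fin n) ℝ)) := by
    refine tendsto_pi_nhds.2 ?_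
    intro i
    refine tendsto_pi_nhds.2 ?_
    intro j
    by_cases hij : i = j
    · subst hij
      simp only [Matrix.diagonal_apply_eq, Matrix.zero_apply]
      apply Real.tendsto_exp_atBot.comp
      apply Tendsto.atBot_mul_const (hH.eigenvalues_pos i)
      exact tendsto_intCast_atBot_iff.mpr tendsto_id
    · simp only [Matrix.diagonal_apply_ne _ hij, Matrix.zero_apply]
      exact tendsto_const_nhds
  have hc : Continuous (fun D : Matrix (Fin n) (Fin n) ℝ => U * D * star U) :=
    (continuous_const.matrix_mul continuous_id).matrix_mul continuous_const
  have hcomp := (hc.tendsto 0).comp hd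
  simp only [Function.comp_def] at hcomp
  simp only [hdiag]
  simpa using hcomp

end AuxLemmas

/-- The signed sum `Σ e^{-jH} A (f j - f (j-1))` used to express `G` and its increments. -/
noncomputable def ssum {n : ℕ} (H A : Matrix (Fin n) (Fin n) ℝ) (t : ℤ)
    (f : ℤ → Fin n → ℝ) : Fin n → ℝ :=
  (∑ j ∈ Finset.Icc 1 t, (zexp H (-j)) *ᵥ (A *ᵥ (f j - f (j-1)))) -
    ∑ j ∈ Finset.Icc (t+1) 0, (zexp H (-j)) *ᵥ (A *ᵥ (f j - f (j-1)))

section SsumLemmas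

variable {n : ℕ} (H : Matrix (Fin n) (Fin n) ℝ)

lemma ssum_zero (A : Matrix (Fin n) (Fin n) ℝ) (f : ℤ → Fin n → ℝ) :
    ssum H A 0 f = 0 := by
  simp [ssum, Finset.Icc_eq_empty_of_lt (show (0:ℤ) < 1 by norm_num)]

lemma ssum_step (A : Matrix (Fin n) (Fin n) ℝ) (t : ℤ) (f : ℤ → Fin n → ℝ) :
    ssum H A t f = ssum H A (t-1) f + (zexp H (-t)) *ᵥ (A *ᵥ (f t - f (t-1))) := by
  unfold ssum
  by_cases ht : 1 ≤ t
  · rw [Finset.Icc_eq_empty (show ¬ (t+1 ≤ 0) by omega),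
      Finset.Icc_eq_empty (show ¬ (t-1+1 ≤ 0) by omega),
      show Finset.Icc 1 t = insert t (Finset.Icc 1 (t-1)) by ext x; simp [Finset.mem_Icc]; omega,
      Finset.sum_insert (by simp [Finset.mem_Icc])]
    simp only [Finset.sum_empty]
    abel
  · rw [Finset.Icc_eq_empty (show ¬ (1 ≤ t) from ht),
      Finset.Icc_eq_empty (show ¬ ((1:ℤ) ≤ t-1) by omega),
      show Finset.Icc (t-1+1) 0 = insert t (Finset.Icc (t+1) 0) by
        ext x; simp [Finset.mem_Icc]; omega,
      Finset.sum_insert (by simp [Finset.mem_Icc])]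
    simp only [Finset.sum_empty]
    abel

lemma ssum_congr {A : Matrix (Fin n) (Fin n) ℝ} {t : ℤ} {f g : ℤ → Fin n → ℝ}
    (h : ∀ j, t ⊓ 0 - 1 ≤ j → j ≤ t ⊔ 0 → f j = g j) :
    ssum H A t f = ssum H A t g := by
  unfold ssum
  congr 1 <;>
  · refine Finset.sum_congr rfl fun j hj => ?_
    simp only [Finset.mem_Icc] at hj
    rw [h j (by omega) (by omega), h (j-1) (by omega) (by omega)]

lemma ssum_unscale (s t : ℤ) (g : ℤ → Fin n → ℝ) :
    ssum H (zexp H (-s)) t (fun j => (zexp H s) *ᵥ g j) = ssum H 1 t g := by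
  unfold ssum
  congr 1 <;>
  · refine Finset.sum_congr rfl fun j hj => ?_
    rw [← Matrix.mulVec_sub, zexp_cancel', Matrix.one_mulVec]

lemma measurable_mulVec_comp {α : Type*} [MeasurableSpace α] (M : Matrix (Fin n) (Fin n) ℝ)
    {g : α → Fin n → ℝ} (hg : Measurable g) : Measurable fun a => M *ᵥ (g a) := by
  apply measurable_pi_lambda
  intro i
  simp only [Matrix.mulVec, dotProduct]
  exact Finset.measurable_sum _ fun j _ => ((measurable_pi_apply j).comp hg).const_mul (M i j)

lemma tele (g : ℤ → Fin n → ℝ) (l : ℤ) (hl : l ≤ 0) :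
    ∑ k ∈ Finset.Icc l 0, (g k - g (k-1)) = g 0 - g (l-1) := by
  refine Int.le_induction_down
    (motive := fun l _ => ∑ k ∈ Finset.Icc l 0, (g k - g (k-1)) = g 0 - g (l-1)) ?_ ?_ l hl
  · simp
  · intro k hk ih
    rw [show Finset.Icc (k-1) 0 = insert (k-1) (Finset.Icc k 0) by
        ext x; simp [Finset.mem_Icc]; omega,
      Finset.sum_insert (by simp [Finset.mem_Icc]), ih,
      show k - 1 - 1 = k - 2 by ring]
    abel

end SsumLemmas

/-- given an `H`-self-similar process `Y` (with `Y t` representing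
`Y_{e^t}`), the process `G` defined by `G_t = Σ_{k=1}^t e^{−kH} Δ_k Y_{e^k}` for
`t ≥ 1`, `G_0 = 0` and `G_t = −Σ_{k=t+1}^0 e^{−kH} Δ_k Y_{e^k}` for `t ≤ −1`
has stationary increments, starts from `0`, and its partial sums
`Σ_{k=l}^0 e^{kH} Δ_k G` converge in probability to `Y_{e^0} = Y_1` as `l → −∞`;
in particular `G ∈ 𝒢_H`. -/
theorem stmt3 {n : ℕ} [MeasurableSpace Ω] (μ : Measure Ω) [IsProbabilityMeasure μ]
    (H : Matrix (Fin n) (Fin n) ℝ) (hH : H.PosDef)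
    (Y : ℤ → Ω → (Fin n → ℝ)) (hmeas : ∀ t, Measurable (Y t))
    (hY : IsSelfSimilar μ H Y)
    (G : ℤ → Ω → (Fin n → ℝ))
    (hGpos : ∀ t : ℤ, 1 ≤ t → ∀ ω,
      G t ω = ∑ k ∈ Finset.Icc 1 t, (zexp H (-k)).mulVec (Y k ω - Y (k - 1) ω))
    (hG0 : ∀ ω, G 0 ω = 0)
    (hGneg : ∀ t : ℤ, t ≤ -1 → ∀ ω,
      G t ω = -∑ k ∈ Finset.Icc (t + 1) 0, (zexp H (-k)).mulVec (Y k ω - Y (k - 1) ω)) :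
    HasStationaryIncrements μ G ∧ (∀ ω, G 0 ω = 0) ∧
      TendstoInMeasure μ (fun l => partialSumG H G l) Filter.atBot (Y 0) ∧
      MemG μ H G := by
  have hGs : ∀ (t : ℤ) (ω : Ω), G t ω = ssum H 1 t (fun j => Y j ω) := by
    intro t ω
    rcases lt_trichotomy t 0 with h|h|h
    · rw [hGneg t (by omega) ω]
      unfold ssum
      rw [Finset.Icc_eq_empty (show ¬ ((1:ℤ) ≤ t) by omega), Finset.sum_empty, zero_sub]
      congr 1
      exact Finset.sum_congr rfl fun k _ => by rw [Matrix.one_mulVec]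
    · subst h; rw [hG0, ssum_zero]
    · rw [hGpos t (by omega) ω]
      unfold ssum
      rw [Finset.Icc_eq_empty (show ¬ (t+1 ≤ 0) by omega), Finset.sum_empty, sub_zero]
      exact Finset.sum_congr rfl fun k _ => by rw [Matrix.one_mulVec]
  have hInc : ∀ (k : ℤ) (ω : Ω),
      G k ω - G (k-1) ω = (zexp H (-k)) *ᵥ (Y k ω - Y (k-1) ω) := by
    intro k ω
    rw [hGs k ω, hGs (k-1) ω, ssum_step H 1 k]
    rw [Matrix.one_mulVec]
    abel
  have hStep : ∀ (s a : ℤ) (ω : Ω),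
      (G (a + s) ω - G s ω) - (G ((a-1) + s) ω - G s ω) =
      ssum H (zexp H (-s)) a (fun j => Y (j+s) ω) -
        ssum H (zexp H (-s)) (a-1) (fun j => Y (j+s) ω) := by
    intro s a ω
    rw [ssum_step H (zexp H (-s)) a]
    have h1 : (G (a + s) ω - G s ω) - (G ((a-1) + s) ω - G s ω)
        = G (a+s) ω - G ((a+s)-1) ω := by
      rw [show (a-1)+s = (a+s)-1 by ring]
      abel
    rw [h1, hInc (a+s) ω]
    rw [Matrix.mulVec_mulVec, zexp_mul, show -a + -s = -(a+s) by ring,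
      show a-1+s = a+s-1 by ring]
    abel
  have hKey : ∀ (s t : ℤ) (ω : Ω),
      G (t + s) ω - G s ω = ssum H (zexp H (-s)) t (fun j => Y (j+s) ω) := by
    intro s t ω
    induction t using Int.induction_on with
    | zero => rw [zero_add, sub_self, ssum_zero]
    | succ k ih =>
      have hs := hStep s ((k:ℤ)+1) ω
      rw [show ((k:ℤ)+1-1) = (k:ℤ) by ring] at hs
      calc G ((k:ℤ)+1+s) ω - G s ω
          = ((G ((k:ℤ)+1+s) ω - G s ω) - (G ((k:ℤ)+s) ω - G s ω))
            + (G ((k:ℤ)+s) ω - G s ω) := by abel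
        _ = ssum H (zexp H (-s)) ((k:ℤ)+1) (fun j => Y (j+s) ω) := by
            rw [hs, ih]; abel
    | pred k ih =>
      have hs := hStep s (-(k:ℤ)) ω
      calc G (-(k:ℤ)-1+s) ω - G s ω
          = (G (-(k:ℤ)+s) ω - G s ω)
            - ((G (-(k:ℤ)+s) ω - G s ω) - (G (-(k:ℤ)-1+s) ω - G s ω)) := by abel
        _ = ssum H (zexp H (-s)) (-(k:ℤ)-1) (fun j => Y (j+s) ω) := by
            rw [hs, ih]; abel
  have hstat : HasStationaryIncrements μ G := by
    intro s m t
    classical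
    set N : ℕ := (Finset.univ.sup fun i => (t i).natAbs) + 1 with hN
    have htN : ∀ i, (t i).natAbs < N :=
      fun i => Nat.lt_succ_of_le (Finset.le_sup (f := fun i => (t i).natAbs) (Finset.mem_univ i))
    have htoIdxlt : ∀ j : ℤ, min (j + N).toNat (2*N) < 2*N+1 := by omega
    set toIdx : ℤ → Fin (2*N+1) := fun j => ⟨min (j + N).toNat (2*N), htoIdxlt j⟩ with htoIdx
    set u : Fin (2*N+1) → ℤ := fun i => (i.val : ℤ) - N with hudef
    have huIdx : ∀ j : ℤ, -(N:ℤ) ≤ j → j ≤ N → u (toIdx j) = j := by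
      intro j h1 h2
      simp only [hudef, htoIdx]
      push_cast
      omega
    set Φ : (Fin (2*N+1) → Fin n → ℝ) → (Fin m → Fin n → ℝ) :=
      fun f i => ssum H (zexp H (-s)) (t i) (fun j => f (toIdx j)) with hΦdef
    have hΦ : Measurable Φ := by
      apply measurable_pi_lambda
      intro i
      simp only [hΦdef, ssum]
      apply Measurable.sub <;>
      · apply Finset.measurable_sum
        intro j _
        exact measurable_mulVec_comp _ (measurable_mulVec_comp _
          ((measurable_pi_apply _).sub (measurable_pi_apply _)))
    have hX1 : Measurable (fun ω (i : Fin (2*N+1)) => Y (u i + s) ω) :=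
      measurable_pi_lambda _ fun i => hmeas _
    have hX2 : Measurable (fun ω (i : Fin (2*N+1)) => (zexp H s) *ᵥ (Y (u i) ω)) :=
      measurable_pi_lambda _ fun i => measurable_mulVec_comp _ (hmeas _)
    have h1 : (fun ω (i : Fin m) => G (t i + s) ω - G s ω) =
        Φ ∘ (fun ω i => Y (u i + s) ω) := by
      funext ω
      funext i
      show G (t i + s) ω - G s ω
        = ssum H (zexp H (-s)) (t i) (fun j => Y (u (toIdx j) + s) ω)
      rw [hKey s (t i) ω]
      apply ssum_congr
      intro j hj1 hj2
      have hti := htN i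
      rw [huIdx j (by omega) (by omega)]
    have h2 : (fun ω (i : Fin m) => G (t i) ω - G 0 ω) =
        Φ ∘ (fun ω i => (zexp H s) *ᵥ (Y (u i) ω)) := by
      funext ω
      funext i
      show G (t i) ω - G 0 ω
        = ssum H (zexp H (-s)) (t i) (fun j => (zexp H s) *ᵥ (Y (u (toIdx j)) ω))
      rw [hG0, sub_zero, hGs (t i) ω, ← ssum_unscale H s (t i) (fun j => Y j ω)]
      apply ssum_congr
      intro j hj1 hj2
      have hti := htN i
      rw [huIdx j (by omega) (by omega)]
    calc μ.map (fun ω (i : Fin m) => G (t i + s) ω - G s ω)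
        = (μ.map (fun ω (i : Fin (2*N+1)) => Y (u i + s) ω)).map Φ := by
          rw [h1, ← Measure.map_map hΦ hX1]
      _ = (μ.map (fun ω (i : Fin (2*N+1)) => (zexp H s) *ᵥ (Y (u i) ω))).map Φ := by
          rw [hY s (2*N+1) u]
      _ = μ.map (fun ω (i : Fin m) => G (t i) ω - G 0 ω) := by
          rw [h2, ← Measure.map_map hΦ hX2]
  have htel : ∀ l : ℤ, l ≤ 0 → ∀ ω, partialSumG H G l ω = Y 0 ω - Y (l-1) ω := by
    intro l hl ω
    unfold partialSumG
    have h1 : ∀ k ∈ Finset.Icc l (0:ℤ),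
        (zexp H k) *ᵥ (G k ω - G (k-1) ω) = Y k ω - Y (k-1) ω := by
      intro k _
      rw [hInc k ω, Matrix.mulVec_mulVec, zexp_mul, show k + -k = 0 by ring, zexp_zero,
        Matrix.one_mulVec]
    rw [Finset.sum_congr rfl h1]
    exact tele (fun k => Y k ω) l hl
  have hconv : TendstoInMeasure μ (fun l => partialSumG H G l) Filter.atBot (Y 0) := by
    rw [tendstoInMeasure_iff_dist]
    intro ε hε
    refine ENNReal.tendsto_nhds_zero.2 fun η hη => ?_
    obtain ⟨M, hM1, hMη⟩ : ∃ M : ℝ, 1 ≤ M ∧ μ {x | M ≤ ‖Y 0 x‖} ≤ η := by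
      have hmsets : ∀ k : ℕ, NullMeasurableSet {x | ((k:ℝ)+1) ≤ ‖Y 0 x‖} μ := fun k =>
        (measurableSet_le measurable_const (hmeas 0).norm).nullMeasurableSet
      have hanti : Antitone (fun k : ℕ => {x | ((k:ℝ)+1) ≤ ‖Y 0 x‖}) := by
        intro a b hab x hx
        simp only [Set.mem_setOf_eq] at hx ⊢
        have : (a:ℝ) ≤ b := by exact_mod_cast hab
        linarith
      have hint : ⋂ k : ℕ, {x | ((k:ℝ)+1) ≤ ‖Y 0 x‖} = ∅ := by
        ext x
        simp only [Set.mem_iInter, Set.mem_setOf_eq, Set.mem_empty_iff_false, iff_false,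
          not_forall, not_le]
        obtain ⟨k, hk⟩ := exists_nat_gt (‖Y 0 x‖)
        exact ⟨k, by linarith⟩
      have htnd := MeasureTheory.tendsto_measure_iInter_atTop hmsets hanti ⟨0, measure_ne_top μ _⟩
      rw [hint] at htnd
      simp only [measure_empty] at htnd
      obtain ⟨k, hk⟩ := ((ENNReal.tendsto_nhds_zero.1 htnd) η hη).exists
      refine ⟨(k:ℝ)+1, by linarith [Nat.cast_nonneg (α := ℝ) k], hk⟩
    set δ : ℝ := ε / ((n:ℝ) * M + 1) with hδdef
    have hnM : (0:ℝ) ≤ (n:ℝ) * M := by positivity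
    have hδ : 0 < δ := by
      apply div_pos hε
      linarith
    have hev : ∀ᶠ (l : ℤ) in Filter.atBot, ∀ i j, |zexp H (l-1) i j| ≤ δ := by
      have hz := zexp_tendsto H hH
      have hent : ∀ i j, ∀ᶠ (m : ℤ) in Filter.atBot, |zexp H m i j| ≤ δ := by
        intro i j
        have h2 : Tendsto (fun m : ℤ => zexp H m i j) atBot (𝓝 0) := by
          have h3 := tendsto_pi_nhds.1 hz i
          have h4 := tendsto_pi_nhds.1 h3 j
          simpa using h4
        have h5 := Metric.tendsto_nhds.1 h2 δ hδ
        refine h5.mono fun m hm => ?_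
        rw [Real.dist_eq, sub_zero] at hm
        exact hm.le
      have hall : ∀ᶠ (m : ℤ) in Filter.atBot, ∀ i j, |zexp H m i j| ≤ δ :=
        Filter.eventually_all.2 fun i => Filter.eventually_all.2 (hent i)
      have hsub : Tendsto (fun l : ℤ => l - 1) atBot atBot := by
        simpa [sub_eq_add_neg] using tendsto_atBot_add_const_right atBot (-1 : ℤ) tendsto_id
      exact hsub.eventually hall
    filter_upwards [hev, Filter.eventually_le_atBot (0 : ℤ)] with l hsmall hl0
    have hseteq : {x | ε ≤ dist (partialSumG H G l x) (Y 0 x)} = {x | ε ≤ ‖Y (l-1) x‖} := by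
      ext x
      simp only [Set.mem_setOf_eq]
      rw [htel l hl0 x, dist_eq_norm,
        show Y 0 x - Y (l-1) x - Y 0 x = -(Y (l-1) x) by abel, norm_neg]
    rw [hseteq]
    have hX1 : Measurable (fun ω (_ : Fin 1) => Y ((0:ℤ) + (l-1)) ω) :=
      measurable_pi_lambda _ fun _ => hmeas _
    have hX2 : Measurable (fun ω (_ : Fin 1) => (zexp H (l-1)) *ᵥ (Y 0 ω)) :=
      measurable_pi_lambda _ fun _ => measurable_mulVec_comp _ (hmeas 0)
    have hS : MeasurableSet {f : Fin 1 → Fin n → ℝ | ε ≤ ‖f 0‖} :=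
      measurableSet_le measurable_const (measurable_pi_apply 0).norm
    have hμeq : μ {x | ε ≤ ‖Y (l-1) x‖} = μ {x | ε ≤ ‖(zexp H (l-1)) *ᵥ (Y 0 x)‖} := by
      have hfd := hY (l-1) 1 (fun _ => (0:ℤ))
      have hfd2 := congrArg (fun ν : Measure (Fin 1 → Fin n → ℝ) => ν {f | ε ≤ ‖f 0‖}) hfd
      simp only at hfd2
      rw [Measure.map_apply hX1 hS, Measure.map_apply hX2 hS] at hfd2
      simpa [Set.preimage_setOf_eq] using hfd2
    rw [hμeq]
    refine le_trans (measure_mono ?_) hMη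
    intro x hx
    simp only [Set.mem_setOf_eq] at hx ⊢
    by_contra hcon
    push_neg at hcon
    have hb : ∀ i : Fin n, ‖((zexp H (l-1)) *ᵥ (Y 0 x)) i‖ ≤ (n:ℝ) * (δ * M) := by
      intro i
      rw [Real.norm_eq_abs]
      calc |((zexp H (l-1)) *ᵥ (Y 0 x)) i|
          = |∑ j, zexp H (l-1) i j * Y 0 x j| := by
            simp [Matrix.mulVec, dotProduct]
        _ ≤ ∑ j, |zexp H (l-1) i j * Y 0 x j| := Finset.abs_sum_le_sum_abs _ _
        _ ≤ ∑ _j : Fin n, δ * M := by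
            refine Finset.sum_le_sum fun j _ => ?_
            rw [abs_mul]
            refine mul_le_mul (hsmall i j) ?_ (abs_nonneg _) hδ.le
            calc |Y 0 x j| ≤ ‖Y 0 x‖ := by
                  rw [← Real.norm_eq_abs]; exact norm_le_pi_norm _ j
              _ ≤ M := hcon.le
        _ = (n:ℝ) * (δ * M) := by
            simp [Finset.sum_const, Finset.card_univ, nsmul_eq_mul]
    have hnorm : ‖(zexp H (l-1)) *ᵥ (Y 0 x)‖ ≤ (n:ℝ) * (δ * M) := by
      refine (pi_norm_le_iff_of_nonneg (by positivity)).2 hb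
    have hlt : (n:ℝ) * (δ * M) < ε := by
      rw [hδdef, show (n:ℝ) * (ε / ((n:ℝ)*M+1) * M) = ((n:ℝ)*M) * ε / ((n:ℝ)*M+1) by ring,
        div_lt_iff₀ (by linarith)]
      nlinarith
    linarith [hx.trans hnorm]
  exact ⟨hstat, hG0, hconv, hG0, hstat, ⟨Y 0, hconv⟩⟩
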